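/- Let C be a generating set of the monoid End P_n or of the monoid wEnd P_n. Then C contains at least ⌊(n−1)/2⌋ distinct transformations α with inv(α) = 1, and at least Σ_{j=1}^{⌊(n−3)/3⌋} ⌊(n−3j−1)/2⌋ distinct transformations α with inv(α) = 2. -/

import Mathlib

/-- `α` is a weak endomorphism of the path `P_n` (with vertices `0,…,n-1` standing for
`1,…,n`): `|iα - (i+1)α| ≤ 1` for all consecutive pairs of vertices. -/
def IsWEndo {n : ℕ} (f : Function.End (Fin n)) : Prop :=
  ∀ i : ℕ, ∀ h : i + 1 < n,
    |(((f ⟨i, by omega⟩ : Fin n) : ℕ) : ℤ) - (((f ⟨i + 1, h⟩ : Fin n) : ℕ) : ℤ)| ≤ 1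

/-- `α` is an endomorphism of the path `P_n`: `|iα - (i+1)α| = 1` for all consecutive
pairs of vertices. -/
def IsEndo {n : ℕ} (f : Function.End (Fin n)) : Prop :=
  ∀ i : ℕ, ∀ h : i + 1 < n,
    |(((f ⟨i, by omega⟩ : Fin n) : ℕ) : ℤ) - (((f ⟨i + 1, h⟩ : Fin n) : ℕ) : ℤ)| = 1

/-- The set of inversions of `α`: indices `i ∈ {2,…,n-1}` (in `0`-indexed form
`i ∈ {1,…,n-2}`) with `(i-1)α = (i+1)α ≠ iα`. -/
def InvSet {n : ℕ} (f : Function.End (Fin n)) : Set ℕ :=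
  {i | ∃ (h1 : 1 ≤ i) (h2 : i + 1 < n),
    f ⟨i - 1, by omega⟩ = f ⟨i + 1, h2⟩ ∧ f ⟨i + 1, h2⟩ ≠ f ⟨i, by omega⟩}

namespace PathGen

variable {n : ℕ}

/-- value of `f` at `i`, as a natural number, defaulting to `0` out of range -/
def U (f : Function.End (Fin n)) (i : ℕ) : ℕ := if h : i < n then (f ⟨i, h⟩).val else 0

lemma U_eq (f : Function.End (Fin n)) {i : ℕ} (h : i < n) : U f i = (f ⟨i, h⟩).val :=
  dif_pos h

lemma U_lt (f : Function.End (Fin n)) {i : ℕ} (hi : i < n) : U f i < n := by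
  rw [U_eq f hi]; exact (f _).isLt

lemma fin_eq_iff (f : Function.End (Fin n)) {a b : ℕ} (ha : a < n) (hb : b < n) :
    f ⟨a, ha⟩ = f ⟨b, hb⟩ ↔ U f a = U f b := by
  rw [U_eq f ha, U_eq f hb]
  exact ⟨congrArg Fin.val, fun h => Fin.val_injective h⟩

lemma U_mul (g h : Function.End (Fin n)) {i : ℕ} (hi : i < n) :
    U (g * h) i = U g (U h i) := by
  have h1 : h ⟨i, hi⟩ = ⟨U h i, U_lt h hi⟩ := Fin.ext (U_eq h hi).symm
  rw [U_eq (g * h) hi, U_eq g (U_lt h hi), ← h1]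
  rfl

lemma isEndo_iff (f : Function.End (Fin n)) :
    IsEndo f ↔ ∀ i, i + 1 < n → (U f (i+1) = U f i + 1 ∨ U f i = U f (i+1) + 1) := by
  constructor
  · intro hf i hi
    have := hf i hi
    rw [abs_eq (by norm_num : (0:ℤ) ≤ 1)] at this
    have e1 : U f i = (f ⟨i, by omega⟩ : Fin n).val := U_eq f (by omega)
    have e2 : U f (i+1) = (f ⟨i+1, hi⟩ : Fin n).val := U_eq f hi
    omega
  · intro hf i hi
    have := hf i hi
    have e1 : U f i = (f ⟨i, by omega⟩ : Fin n).val := U_eq f (by omega)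
    have e2 : U f (i+1) = (f ⟨i+1, hi⟩ : Fin n).val := U_eq f hi
    rw [abs_eq (by norm_num : (0:ℤ) ≤ 1)]
    omega

lemma isWEndo_iff (f : Function.End (Fin n)) :
    IsWEndo f ↔ ∀ i, i + 1 < n → (U f (i+1) ≤ U f i + 1 ∧ U f i ≤ U f (i+1) + 1) := by
  constructor
  · intro hf i hi
    have := hf i hi
    rw [abs_le] at this
    have e1 : U f i = (f ⟨i, by omega⟩ : Fin n).val := U_eq f (by omega)
    have e2 : U f (i+1) = (f ⟨i+1, hi⟩ : Fin n).val := U_eq f hi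
    omega
  · intro hf i hi
    have := hf i hi
    have e1 : U f i = (f ⟨i, by omega⟩ : Fin n).val := U_eq f (by omega)
    have e2 : U f (i+1) = (f ⟨i+1, hi⟩ : Fin n).val := U_eq f hi
    rw [abs_le]
    omega

lemma endo_wendo {f : Function.End (Fin n)} (hf : IsEndo f) : IsWEndo f :=
  fun i hi => le_of_eq (hf i hi)

lemma mem_invSet (f : Function.End (Fin n)) {i : ℕ} :
    i ∈ InvSet f ↔ 1 ≤ i ∧ i + 1 < n ∧ U f (i-1) = U f (i+1) ∧ U f (i+1) ≠ U f i := by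
  constructor
  · rintro ⟨h1, h2, heq, hne⟩
    refine ⟨h1, h2, ?_, ?_⟩
    · exact (fin_eq_iff f (by omega) h2).mp heq
    · intro H
      exact hne ((fin_eq_iff f h2 (by omega)).mpr H)
  · rintro ⟨h1, h2, heq, hne⟩
    exact ⟨h1, h2, (fin_eq_iff f (by omega) h2).mpr heq,
      fun H => hne ((fin_eq_iff f h2 (by omega)).mp H)⟩

lemma U_one {i : ℕ} (hi : i < n) : U (1 : Function.End (Fin n)) i = i := U_eq _ hi

lemma invSet_one : InvSet (1 : Function.End (Fin n)) = ∅ := by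
  ext i
  simp only [Set.mem_empty_iff_false, iff_false, mem_invSet]
  rintro ⟨h1, h2, heq, -⟩
  rw [U_one (by omega), U_one (by omega)] at heq
  omega

/-- the reversal endomorphism -/
def rev : Function.End (Fin n) := fun x => ⟨n - 1 - (x : ℕ), by have := x.isLt; omega⟩

lemma U_rev {i : ℕ} (hi : i < n) : U (rev : Function.End (Fin n)) i = n - 1 - i := by
  rw [U_eq _ hi]; rfl

lemma rev_mul_rev : (rev : Function.End (Fin n)) * rev = 1 := by
  funext x
  have := x.isLt
  show rev (rev x) = x
  simp only [rev]
  exact Fin.ext (by simp; omega)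

lemma sign_step {f : Function.End (Fin n)} (hf : IsEndo f) {i : ℕ} (h1 : 1 ≤ i)
    (h2 : i + 1 < n) (hni : i ∉ InvSet f) :
    (U f (i+1) : ℤ) - U f i = (U f i : ℤ) - U f (i-1) := by
  have e1 := (isEndo_iff f).mp hf (i-1) (by omega)
  rw [show i - 1 + 1 = i from by omega] at e1
  have e2 := (isEndo_iff f).mp hf i h2
  have hne : ¬(U f (i-1) = U f (i+1) ∧ U f (i+1) ≠ U f i) := by
    intro ⟨a, b⟩; exact hni ((mem_invSet f).mpr ⟨h1, h2, a, b⟩)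
  omega

lemma run {f : Function.End (Fin n)} (hf : IsEndo f) {a b : ℕ} (hb : b < n)
    (hnone : ∀ k, a < k → k < b → k ∉ InvSet f) :
    ∀ i, a ≤ i → i ≤ b →
      (U f i : ℤ) = U f a + ((i : ℤ) - a) * ((U f (a+1) : ℤ) - U f a) := by
  have steps : ∀ i, a ≤ i → i + 1 ≤ b →
      (U f (i+1) : ℤ) - U f i = (U f (a+1) : ℤ) - U f a := by
    intro i hai
    induction i, hai using Nat.le_induction with
    | base => intro _; rfl
    | succ i hai ih =>
      intro hib
      have ih' := ih (by omega)
      have hs := sign_step hf (i := i+1) (by omega) (by omega)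
        (hnone (i+1) (by omega) (by omega))
      rw [show i + 1 - 1 = i from by omega] at hs
      rw [hs, ih']
  intro i hai
  induction i, hai using Nat.le_induction with
  | base => intro _; simp
  | succ i hai ih =>
    intro hib
    have ih' := ih (by omega)
    have hs := steps i hai (by omega)
    push_cast at ih' ⊢
    linarith [hs, ih']

lemma eq_one_or_rev {f : Function.End (Fin n)} (hf : IsEndo f) (hn : 2 ≤ n)
    (hI : InvSet f = ∅) : f = 1 ∨ f = rev := by
  have hrun := run hf (a := 0) (b := n-1) (by omega)
    (fun k _ _ => by rw [hI]; exact Set.notMem_empty k)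
  have hs := (isEndo_iff f).mp hf 0 (by omega)
  have hval : ∀ i : ℕ, i < n → U f i < n := fun i hi => U_lt f hi
  rcases hs with hup | hdown
  · left
    have hrun' : ∀ i : ℕ, i < n → U f i = U f 0 + i := by
      intro i hi
      have hx := hrun i (by omega) (by omega)
      have hc : (U f (0+1) : ℤ) - U f 0 = 1 := by
        have : U f (0+1) = U f 0 + 1 := hup
        omega
      rw [hc, mul_one] at hx
      omega
    have h00 : U f 0 = 0 := by
      have := hrun' (n-1) (by omega)
      have := hval (n-1) (by omega)
      omega
    funext x
    apply Fin.val_injective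
    have hx := hrun' x.val x.isLt
    rw [h00] at hx
    have : (f x).val = U f x.val := by
      rw [U_eq f x.isLt]
    show (f x).val = x.val
    omega
  · right
    have hrun' : ∀ i : ℕ, i < n → U f i + i = U f 0 := by
      intro i hi
      have hx := hrun i (by omega) (by omega)
      have hc : (U f (0+1) : ℤ) - U f 0 = -1 := by
        have : U f 0 = U f (0+1) + 1 := hdown
        omega
      rw [hc] at hx
      ring_nf at hx
      omega
    have h00 : U f 0 = n - 1 := by
      have h1 := hrun' (n-1) (by omega)
      have := hval 0 (by omega)
      omega
    funext x
    apply Fin.val_injective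
    have hx := hrun' x.val x.isLt
    rw [h00] at hx
    have : (f x).val = U f x.val := by
      rw [U_eq f x.isLt]
    have hrv : (rev x : Fin n).val = n - 1 - x.val := rfl
    show (f x).val = (rev x).val
    omega

lemma pair_of_one_inv {f : Function.End (Fin n)} (hf : IsEndo f) {t : ℕ}
    (hI : InvSet f = {t}) {s : ℕ} (hs : s ≤ t) (hs2 : t + s < n) :
    U f (t - s) = U f (t + s) := by
  have ht : t ∈ InvSet f := by rw [hI]; exact Set.mem_singleton t
  obtain ⟨ht1, ht2, hinv, -⟩ := (mem_invSet f).mp ht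
  have runL := run hf (a := 0) (b := t) (by omega)
    (fun k hk1 hk2 => by rw [hI]; simp; omega)
  have runR := run hf (a := t) (b := n-1) (by omega)
    (fun k hk1 hk2 => by rw [hI]; simp; omega)
  have hstrict0 := (isEndo_iff f).mp hf 0 (by omega)
  have A := runL (t-s) (by omega) (by omega)
  have B := runL (t-1) (by omega) (by omega)
  have Ct := runL t (by omega) le_rfl
  have R := runR (t+s) (by omega) (by omega)
  rcases hstrict0 with h|h
  · have hc : (U f (0+1) : ℤ) - U f 0 = 1 := by omega
    rw [hc] at A B Ct
    have hc2 : (U f (t+1) : ℤ) - U f t = -1 := by omega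
    rw [hc2] at R
    omega
  · have hc : (U f (0+1) : ℤ) - U f 0 = -1 := by omega
    rw [hc] at A B Ct
    have hc2 : (U f (t+1) : ℤ) - U f t = 1 := by omega
    rw [hc2] at R
    omega

lemma two_inv_contra {f : Function.End (Fin n)} (hf : IsEndo f) {t1 t2 : ℕ}
    (h12 : t1 < t2) (hm1 : t2 - t1 < t1) (hm2 : t2 - t1 < n - 1 - t2)
    (hI : InvSet f = {t1, t2}) :
    U f (t1 - (t2 - t1 + 1)) ≠ U f (t2 + 1) ∧
    U f (t1 - 1) ≠ U f (t2 + (t2 - t1 + 1)) := by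
  have ht1 : t1 ∈ InvSet f := by rw [hI]; exact Set.mem_insert t1 {t2}
  have ht2 : t2 ∈ InvSet f := by rw [hI]; exact Set.mem_insert_of_mem t1 rfl
  obtain ⟨ha1, ha2, hinv1, -⟩ := (mem_invSet f).mp ht1
  obtain ⟨hb1, hb2, hinv2, -⟩ := (mem_invSet f).mp ht2
  have runL := run hf (a := 0) (b := t1) (by omega)
    (fun k hk1 hk2 => by rw [hI]; simp; omega)
  have runM := run hf (a := t1) (b := t2) (by omega)
    (fun k hk1 hk2 => by rw [hI]; simp; omega)
  have runR := run hf (a := t2) (b := n-1) (by omega)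
    (fun k hk1 hk2 => by rw [hI]; simp; omega)
  have hstrict0 := (isEndo_iff f).mp hf 0 (by omega)
  have A := runL (t1 - (t2 - t1 + 1)) (by omega) (by omega)
  have B := runL (t1-1) (by omega) (by omega)
  have Ct := runL t1 (by omega) le_rfl
  have M2 := runM (t2-1) (by omega) (by omega)
  have M3 := runM t2 (by omega) le_rfl
  have R1 := runR (t2+1) (by omega) (by omega)
  have R2 := runR (t2 + (t2 - t1 + 1)) (by omega) (by omega)
  rcases hstrict0 with h|h
  · have hc : (U f (0+1) : ℤ) - U f 0 = 1 := by omega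
    rw [hc] at A B Ct
    have hc1 : (U f (t1+1) : ℤ) - U f t1 = -1 := by omega
    rw [hc1] at M2 M3
    have hc2 : (U f (t2+1) : ℤ) - U f t2 = 1 := by omega
    rw [hc2] at R1 R2
    omega
  · have hc : (U f (0+1) : ℤ) - U f 0 = -1 := by omega
    rw [hc] at A B Ct
    have hc1 : (U f (t1+1) : ℤ) - U f t1 = 1 := by omega
    rw [hc1] at M2 M3
    have hc2 : (U f (t2+1) : ℤ) - U f t2 = -1 := by omega
    rw [hc2] at R1 R2
    omega

lemma endo_of_factor {f g h : Function.End (Fin n)} (hf : IsEndo f) (hfe : f = g * h)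
    (hh : IsWEndo h) : IsEndo h := by
  rw [isEndo_iff]
  intro i hi
  have hw := (isWEndo_iff h).mp hh i hi
  have hst := (isEndo_iff f).mp hf i hi
  have e1 : U f i = U g (U h i) := by rw [hfe]; exact U_mul g h (by omega)
  have e2 : U f (i+1) = U g (U h (i+1)) := by rw [hfe]; exact U_mul g h hi
  have hne : U h i ≠ U h (i+1) := by
    intro H; rw [H] at e1; omega
  omega

lemma invSet_subset_of_factor {f g h : Function.End (Fin n)} (hf : IsEndo f)
    (hfe : f = g * h) : InvSet h ⊆ InvSet f := by
  intro p hp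
  obtain ⟨h1, h2, heq, -⟩ := (mem_invSet h).mp hp
  have e1 : U f (p-1) = U g (U h (p-1)) := by rw [hfe]; exact U_mul g h (by omega)
  have e2 : U f (p+1) = U g (U h (p+1)) := by rw [hfe]; exact U_mul g h h2
  have hst := (isEndo_iff f).mp hf p h2
  refine (mem_invSet f).mpr ⟨h1, h2, ?_, by omega⟩
  rw [e1, e2, heq]

lemma endo_mul_rev {f : Function.End (Fin n)} (hf : IsEndo f) : IsEndo (f * rev) := by
  rw [isEndo_iff]
  intro i hi
  have e1 : U (f * rev) i = U f (n - 1 - i) := by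
    rw [U_mul f rev (by omega), U_rev (by omega)]
  have e2 : U (f * rev) (i+1) = U f (n - 1 - (i+1)) := by
    rw [U_mul f rev hi, U_rev hi]
  have hst := (isEndo_iff f).mp hf (n - 1 - (i+1)) (by omega)
  rw [show n - 1 - (i+1) + 1 = n - 1 - i from by omega] at hst
  omega

lemma mem_invSet_mul_rev {f : Function.End (Fin n)} {i : ℕ} :
    i ∈ InvSet (f * rev) ↔ 1 ≤ i ∧ i + 1 < n ∧ (n - 1 - i) ∈ InvSet f := by
  have key : ∀ j : ℕ, j < n → U (f * rev) j = U f (n - 1 - j) := fun j hj => by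
    rw [U_mul f rev hj, U_rev hj]
  rw [mem_invSet]
  constructor
  · rintro ⟨h1, h2, heq, hne⟩
    have k1 : n - 1 - (i-1) = n - 1 - i + 1 := by omega
    have k2 : n - 1 - (i+1) = n - 1 - i - 1 := by omega
    rw [key (i-1) (by omega), key (i+1) (by omega), k1, k2] at heq
    rw [key (i+1) (by omega), key i (by omega), k2] at hne
    refine ⟨h1, h2, (mem_invSet f).mpr ⟨by omega, by omega, heq.symm, ?_⟩⟩
    rw [heq]; exact hne
  · rintro ⟨h1, h2, hmem⟩
    obtain ⟨-, -, heq, hne⟩ := (mem_invSet f).mp hmem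
    have k1 : n - 1 - (i-1) = n - 1 - i + 1 := by omega
    have k2 : n - 1 - (i+1) = n - 1 - i - 1 := by omega
    refine ⟨h1, h2, ?_, ?_⟩
    · rw [key (i-1) (by omega), key (i+1) (by omega), k1, k2]
      exact heq.symm
    · rw [key (i+1) (by omega), key i (by omega), k2, heq]
      exact hne

lemma invSet_mul_rev_singleton {f : Function.End (Fin n)} {t : ℕ}
    (hI : InvSet f = {t}) : InvSet (f * rev) = {n - 1 - t} := by
  have ht := (mem_invSet f).mp (hI ▸ Set.mem_singleton t)
  obtain ⟨ht1, ht2, -, -⟩ := ht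
  ext i
  rw [Set.mem_singleton_iff, mem_invSet_mul_rev, hI]
  simp only [Set.mem_singleton_iff]
  omega

lemma invSet_mul_rev_pair {f : Function.End (Fin n)} {t1 t2 : ℕ}
    (hI : InvSet f = {t1, t2}) : InvSet (f * rev) = {n - 1 - t2, n - 1 - t1} := by
  have ha := (mem_invSet f).mp (hI ▸ (Set.mem_insert t1 {t2}))
  have hb := (mem_invSet f).mp (show t2 ∈ InvSet f by
    rw [hI]; exact Set.mem_insert_of_mem t1 rfl)
  obtain ⟨ha1, ha2, -, -⟩ := ha
  obtain ⟨hb1, hb2, -, -⟩ := hb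
  ext i
  rw [mem_invSet_mul_rev, hI]
  simp only [Set.mem_insert_iff, Set.mem_singleton_iff]
  omega

lemma g_eq_of_one {f g : Function.End (Fin n)} (hfe : f = g * 1) : g = f := by
  rw [hfe, mul_one]

lemma g_eq_of_rev {f g : Function.End (Fin n)} (hfe : f = g * rev) : g = f * rev := by
  rw [hfe, mul_assoc, rev_mul_rev, mul_one]

/-- The class of path endomorphisms with a single inversion at `t` or `n-1-t`. -/
def Good1 (n t : ℕ) (f : Function.End (Fin n)) : Prop :=
  IsEndo f ∧ (InvSet f = {t} ∨ InvSet f = {n - 1 - t})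

/-- The class of path endomorphisms with inversions exactly `{t1,t2}` or its mirror. -/
def Good2 (n t1 t2 : ℕ) (f : Function.End (Fin n)) : Prop :=
  IsEndo f ∧ (InvSet f = {t1, t2} ∨ InvSet f = {n - 1 - t2, n - 1 - t1})

lemma factor1 {f g h : Function.End (Fin n)} (hf : IsEndo f) {t : ℕ}
    (hI : InvSet f = {t}) (hfe : f = g * h) (hh : IsWEndo h) :
    Good1 n t h ∨ Good1 n t g := by
  have ht := (mem_invSet f).mp (hI ▸ Set.mem_singleton t)
  obtain ⟨ht1, ht2, -, -⟩ := ht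
  have hhe : IsEndo h := endo_of_factor hf hfe hh
  have hsub : InvSet h ⊆ InvSet f := invSet_subset_of_factor hf hfe
  by_cases hmem : t ∈ InvSet h
  · left
    refine ⟨hhe, Or.inl ?_⟩
    apply Set.Subset.antisymm (hI ▸ hsub)
    intro x hx
    rw [Set.mem_singleton_iff] at hx
    rwa [hx]
  · have hempty : InvSet h = ∅ := by
      ext x
      simp only [Set.mem_empty_iff_false, iff_false]
      intro hx
      have := hsub hx
      rw [hI, Set.mem_singleton_iff] at this
      exact hmem (this ▸ hx)
    rcases eq_one_or_rev hhe (by omega) hempty with h1 | hr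
    · right
      rw [h1] at hfe
      rw [g_eq_of_one hfe]
      exact ⟨hf, Or.inl hI⟩
    · right
      rw [hr] at hfe
      rw [g_eq_of_rev hfe]
      exact ⟨endo_mul_rev hf, Or.inr (invSet_mul_rev_singleton hI)⟩

lemma factor2 {f g h : Function.End (Fin n)} (hf : IsEndo f) {t1 t2 : ℕ}
    (h12 : t1 < t2) (hm1 : t2 - t1 < t1) (hm2 : t2 - t1 < n - 1 - t2)
    (hI : InvSet f = {t1, t2}) (hfe : f = g * h) (hh : IsWEndo h) :
    Good2 n t1 t2 h ∨ Good2 n t1 t2 g := by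
  have ha := (mem_invSet f).mp (hI ▸ (Set.mem_insert t1 {t2}))
  have hb := (mem_invSet f).mp (show t2 ∈ InvSet f by
    rw [hI]; exact Set.mem_insert_of_mem t1 rfl)
  obtain ⟨ha1, ha2, -, -⟩ := ha
  obtain ⟨hb1, hb2, -, -⟩ := hb
  have hhe : IsEndo h := endo_of_factor hf hfe hh
  have hsub : InvSet h ⊆ InvSet f := invSet_subset_of_factor hf hfe
  have hcontra := two_inv_contra hf h12 hm1 hm2 hI
  by_cases hmem1 : t1 ∈ InvSet h <;> by_cases hmem2 : t2 ∈ InvSet h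
  · -- both inversions present: h is in the class
    left
    refine ⟨hhe, Or.inl ?_⟩
    apply Set.Subset.antisymm (hI ▸ hsub)
    intro x hx
    rcases hx with hx | hx
    · rwa [hx]
    · rw [Set.mem_singleton_iff] at hx; rwa [hx]
  · -- only t1 : impossible
    exfalso
    have hsingle : InvSet h = {t1} := by
      ext x
      simp only [Set.mem_singleton_iff]
      constructor
      · intro hx
        have := hsub hx
        rw [hI] at this
        rcases this with h' | h'
        · exact h'
        · rw [Set.mem_singleton_iff] at h'
          exact absurd (h' ▸ hx) hmem2
      · intro hx; rwa [hx]
    set m := t2 - t1 with hm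
    have hpair := pair_of_one_inv hhe hsingle (s := m + 1) (by omega) (by omega)
    have e1 : U f (t1 - (m+1)) = U g (U h (t1 - (m+1))) := by
      rw [hfe]; exact U_mul g h (by omega)
    have e2 : U f (t1 + (m+1)) = U g (U h (t1 + (m+1))) := by
      rw [hfe]; exact U_mul g h (by omega)
    rw [show t1 + (m+1) = t2 + 1 from by omega] at e2
    rw [show t1 + (m+1) = t2 + 1 from by omega] at hpair
    exact hcontra.1 (by rw [e1, e2, hpair])
  · -- only t2 : impossible
    exfalso
    have hsingle : InvSet h = {t2} := by
      ext x
      simp only [Set.mem_singleton_iff]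
      constructor
      · intro hx
        have := hsub hx
        rw [hI] at this
        rcases this with h' | h'
        · exact absurd (h' ▸ hx) hmem1
        · rw [Set.mem_singleton_iff] at h'
          exact h'
      · intro hx; rwa [hx]
    set m := t2 - t1 with hm
    have hpair := pair_of_one_inv hhe hsingle (s := m + 1) (by omega) (by omega)
    have e1 : U f (t2 - (m+1)) = U g (U h (t2 - (m+1))) := by
      rw [hfe]; exact U_mul g h (by omega)
    have e2 : U f (t2 + (m+1)) = U g (U h (t2 + (m+1))) := by
      rw [hfe]; exact U_mul g h (by omega)
    rw [show t2 - (m+1) = t1 - 1 from by omega] at e1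
    rw [show t2 - (m+1) = t1 - 1 from by omega] at hpair
    exact hcontra.2 (by rw [e1, e2, hpair])
  · -- no inversions : h is a unit
    have hempty : InvSet h = ∅ := by
      ext x
      simp only [Set.mem_empty_iff_false, iff_false]
      intro hx
      have := hsub hx
      rw [hI] at this
      rcases this with h' | h'
      · exact hmem1 (h' ▸ hx)
      · rw [Set.mem_singleton_iff] at h'
        exact hmem2 (h' ▸ hx)
    rcases eq_one_or_rev hhe (by omega) hempty with h1 | hr
    · right
      rw [h1] at hfe
      rw [g_eq_of_one hfe]
      exact ⟨hf, Or.inl hI⟩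
    · right
      rw [hr] at hfe
      rw [g_eq_of_rev hfe]
      exact ⟨endo_mul_rev hf, Or.inr (invSet_mul_rev_pair hI)⟩

lemma good1_symm {t : ℕ} (ht : t ≤ n - 1) {f : Function.End (Fin n)} :
    Good1 n (n - 1 - t) f → Good1 n t f := by
  rintro ⟨he, h1 | h2⟩
  · exact ⟨he, Or.inr h1⟩
  · rw [show n - 1 - (n - 1 - t) = t from by omega] at h2
    exact ⟨he, Or.inl h2⟩

lemma good2_symm {t1 t2 : ℕ} (h12 : t1 < t2) (hb : t2 ≤ n - 1)
    {f : Function.End (Fin n)} :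
    Good2 n (n - 1 - t2) (n - 1 - t1) f → Good2 n t1 t2 f := by
  rintro ⟨he, h1 | h2⟩
  · exact ⟨he, Or.inr h1⟩
  · rw [show n - 1 - (n - 1 - t1) = t1 from by omega,
      show n - 1 - (n - 1 - t2) = t2 from by omega] at h2
    exact ⟨he, Or.inl h2⟩

lemma descent1 {C : Set (Function.End (Fin n))}
    (hW : ∀ x ∈ Submonoid.closure C, IsWEndo x) {t : ℕ} (ht : t ≤ n - 1) :
    ∀ L : List (Function.End (Fin n)), (∀ y ∈ L, y ∈ C) → Good1 n t L.prod →
      ∃ c ∈ C, Good1 n t c := by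
  intro L
  induction L with
  | nil =>
    intro _ hprod
    exfalso
    rw [List.prod_nil] at hprod
    rcases hprod.2 with h1 | h1 <;>
      exact (Set.singleton_ne_empty _) (invSet_one ▸ h1).symm
  | cons c L ih =>
    intro hmem hprod
    rw [List.prod_cons] at hprod
    obtain ⟨he, hopt⟩ := hprod
    have hLC : ∀ y ∈ L, y ∈ C := fun y hy => hmem y (List.mem_cons_of_mem c hy)
    have hwL : IsWEndo L.prod :=
      hW _ (Submonoid.list_prod_mem _ (fun y hy => Submonoid.subset_closure (hLC y hy)))
    rcases hopt with hI | hI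
    · rcases factor1 he hI rfl hwL with hgood | hgood
      · exact ih hLC hgood
      · exact ⟨c, hmem c List.mem_cons_self, hgood⟩
    · rcases factor1 he hI rfl hwL with hgood | hgood
      · exact ih hLC (good1_symm ht hgood)
      · exact ⟨c, hmem c List.mem_cons_self, good1_symm ht hgood⟩

lemma descent2 {C : Set (Function.End (Fin n))}
    (hW : ∀ x ∈ Submonoid.closure C, IsWEndo x) {t1 t2 : ℕ}
    (h12 : t1 < t2) (hm1 : t2 - t1 < t1) (hm2 : t2 - t1 < n - 1 - t2) :
    ∀ L : List (Function.End (Fin n)), (∀ y ∈ L, y ∈ C) → Good2 n t1 t2 L.prod →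
      ∃ c ∈ C, Good2 n t1 t2 c := by
  intro L
  induction L with
  | nil =>
    intro _ hprod
    exfalso
    rw [List.prod_nil] at hprod
    rcases hprod.2 with h1 | h1 <;>
      · rw [invSet_one] at h1
        exact absurd h1.symm (Set.Nonempty.ne_empty (Set.insert_nonempty _ _))
  | cons c L ih =>
    intro hmem hprod
    rw [List.prod_cons] at hprod
    obtain ⟨he, hopt⟩ := hprod
    have hLC : ∀ y ∈ L, y ∈ C := fun y hy => hmem y (List.mem_cons_of_mem c hy)
    have hwL : IsWEndo L.prod :=
      hW _ (Submonoid.list_prod_mem _ (fun y hy => Submonoid.subset_closure (hLC y hy)))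
    rcases hopt with hI | hI
    · rcases factor2 he h12 hm1 hm2 hI rfl hwL with hgood | hgood
      · exact ih hLC hgood
      · exact ⟨c, hmem c List.mem_cons_self, hgood⟩
    · have h12' : n - 1 - t2 < n - 1 - t1 := by omega
      have hm1' : (n - 1 - t1) - (n - 1 - t2) < n - 1 - t2 := by omega
      have hm2' : (n - 1 - t1) - (n - 1 - t2) < n - 1 - (n - 1 - t1) := by omega
      rcases factor2 he h12' hm1' hm2' hI rfl hwL with hgood | hgood
      · exact ih hLC (good2_symm h12 (by omega) hgood)
      · exact ⟨c, hmem c List.mem_cons_self, good2_symm h12 (by omega) hgood⟩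

/-- canonical single-inversion endomorphism with turn at `t` -/
def can1 (n t : ℕ) : Function.End (Fin n) :=
  fun x => ⟨min (if x.val ≤ t then n - 1 - t + x.val else n - 1 - (x.val - t)) (n - 1),
    by have := x.isLt; omega⟩

lemma U_can1 {t i : ℕ} (hi : i < n) :
    U (can1 n t) i = min (if i ≤ t then n - 1 - t + i else n - 1 - (i - t)) (n - 1) := by
  rw [U_eq _ hi]; rfl

lemma can1_endo {t : ℕ} (ht1 : 1 ≤ t) (ht2 : 2 * t ≤ n - 1) (hn : 3 ≤ n) :
    IsEndo (can1 n t) := by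
  rw [isEndo_iff]
  intro i hi
  rw [U_can1 (show i < n by omega), U_can1 (show i + 1 < n from hi)]
  split_ifs <;> omega

lemma can1_invSet {t : ℕ} (ht1 : 1 ≤ t) (ht2 : 2 * t ≤ n - 1) (hn : 3 ≤ n) :
    InvSet (can1 n t) = {t} := by
  ext i
  rw [Set.mem_singleton_iff, mem_invSet]
  constructor
  · rintro ⟨h1, h2, heq, hne⟩
    rw [U_can1 (show i - 1 < n by omega), U_can1 (show i + 1 < n from h2)] at heq
    rw [U_can1 (show i + 1 < n from h2), U_can1 (show i < n by omega)] at hne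
    split_ifs at heq hne <;> omega
  · rintro rfl
    refine ⟨ht1, by omega, ?_, ?_⟩
    · rw [U_can1 (show i - 1 < n by omega), U_can1 (show i + 1 < n by omega)]
      split_ifs <;> omega
    · rw [U_can1 (show i + 1 < n by omega), U_can1 (show i < n by omega)]
      split_ifs <;> omega

/-- canonical two-inversion endomorphism with turns at `t1 < t2` -/
def can2 (n t1 t2 : ℕ) : Function.End (Fin n) :=
  fun x => ⟨min (if x.val ≤ t1 then x.val else if x.val ≤ t2 then 2 * t1 - x.val
      else x.val - 2 * (t2 - t1)) (n - 1),
    by have := x.isLt; omega⟩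

lemma U_can2 {t1 t2 i : ℕ} (hi : i < n) :
    U (can2 n t1 t2) i = min (if i ≤ t1 then i else if i ≤ t2 then 2 * t1 - i
      else i - 2 * (t2 - t1)) (n - 1) := by
  rw [U_eq _ hi]; rfl

lemma can2_endo {t1 t2 : ℕ} (h12 : t1 < t2) (hm1 : t2 - t1 < t1)
    (hm2 : t2 - t1 < n - 1 - t2) : IsEndo (can2 n t1 t2) := by
  rw [isEndo_iff]
  intro i hi
  rw [U_can2 (show i < n by omega), U_can2 (show i + 1 < n from hi)]
  split_ifs <;> omega

lemma can2_invSet {t1 t2 : ℕ} (h12 : t1 < t2) (hm1 : t2 - t1 < t1)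
    (hm2 : t2 - t1 < n - 1 - t2) : InvSet (can2 n t1 t2) = {t1, t2} := by
  ext i
  simp only [Set.mem_insert_iff, Set.mem_singleton_iff]
  rw [mem_invSet]
  constructor
  · rintro ⟨h1, h2, heq, hne⟩
    rw [U_can2 (show i - 1 < n by omega), U_can2 (show i + 1 < n from h2)] at heq
    rw [U_can2 (show i + 1 < n from h2), U_can2 (show i < n by omega)] at hne
    split_ifs at heq hne <;> omega
  · rintro (rfl | rfl) <;>
    · refine ⟨by omega, by omega, ?_, ?_⟩
      · rw [U_can2 (show i - 1 < n by omega), U_can2 (show i + 1 < n by omega)]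
        split_ifs <;> omega
      · rw [U_can2 (show i + 1 < n by omega), U_can2 (show i < n by omega)]
        split_ifs <;> omega

lemma exists_good1 {C : Set (Function.End (Fin n))}
    (hW : ∀ x ∈ Submonoid.closure C, IsWEndo x)
    (hmemE : ∀ f : Function.End (Fin n), IsEndo f → f ∈ Submonoid.closure C)
    {t : ℕ} (ht1 : 1 ≤ t) (ht2 : 2 * t ≤ n - 1) (hn : 3 ≤ n) :
    ∃ c ∈ C, Good1 n t c := by
  have hendo := can1_endo ht1 ht2 hn
  obtain ⟨L, hL, hprod⟩ := Submonoid.exists_list_of_mem_closure (hmemE _ hendo)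
  exact descent1 hW (by omega) L hL
    (by rw [hprod]; exact ⟨hendo, Or.inl (can1_invSet ht1 ht2 hn)⟩)

lemma exists_good2 {C : Set (Function.End (Fin n))}
    (hW : ∀ x ∈ Submonoid.closure C, IsWEndo x)
    (hmemE : ∀ f : Function.End (Fin n), IsEndo f → f ∈ Submonoid.closure C)
    {t1 t2 : ℕ} (h12 : t1 < t2) (hm1 : t2 - t1 < t1) (hm2 : t2 - t1 < n - 1 - t2) :
    ∃ c ∈ C, Good2 n t1 t2 c := by
  have hendo := can2_endo h12 hm1 hm2
  obtain ⟨L, hL, hprod⟩ := Submonoid.exists_list_of_mem_closure (hmemE _ hendo)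
  exact descent2 hW h12 hm1 hm2 L hL
    (by rw [hprod]; exact ⟨hendo, Or.inl (can2_invSet h12 hm1 hm2)⟩)

noncomputable instance : DecidableEq (Function.End (Fin n)) := Classical.decEq _

instance : Finite (Function.End (Fin n)) := inferInstanceAs (Finite (Fin n → Fin n))

lemma pair_eq {a b c d : ℕ} (h : ({a, b} : Set ℕ) = {c, d}) (hab : a < b)
    (hcd : c < d) : a = c ∧ b = d := by
  have h1 : a ∈ ({c, d} : Set ℕ) := h ▸ Set.mem_insert a {b}
  have h2 : b ∈ ({c, d} : Set ℕ) := h ▸ Set.mem_insert_of_mem a rfl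
  have h3 : c ∈ ({a, b} : Set ℕ) := h.symm ▸ Set.mem_insert c {d}
  simp only [Set.mem_insert_iff, Set.mem_singleton_iff] at h1 h2 h3
  omega

end PathGen


open PathGen in
/-- Any generating set of `End P_n` or of `wEnd P_n` contains at least `⌊(n-1)/2⌋`
transformations with exactly one inversion and at least
`∑_{j=1}^{⌊(n-3)/3⌋} ⌊(n-3j-1)/2⌋` transformations with exactly two inversions. -/
theorem gen_set_inversions (n : ℕ) (C : Set (Function.End (Fin n)))
    (hC : (Submonoid.closure C : Set (Function.End (Fin n))) = {f | IsEndo f} ∨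
          (Submonoid.closure C : Set (Function.End (Fin n))) = {f | IsWEndo f}) :
    (n - 1) / 2 ≤ {f ∈ C | (InvSet f).ncard = 1}.ncard ∧
    (∑ j ∈ Finset.Icc 1 ((n - 3) / 3), (n - 3 * j - 1) / 2) ≤
      {f ∈ C | (InvSet f).ncard = 2}.ncard := by
  have hW : ∀ x ∈ Submonoid.closure C, IsWEndo x := by
    intro x hx
    have hx' : x ∈ (Submonoid.closure C : Set (Function.End (Fin n))) := hx
    rcases hC with h | h
    · rw [h] at hx'; exact endo_wendo hx'
    · rw [h] at hx'; exact hx'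
  have hmemE : ∀ f : Function.End (Fin n), IsEndo f → f ∈ Submonoid.closure C := by
    intro f hf
    rcases hC with h | h
    · have : f ∈ (Submonoid.closure C : Set (Function.End (Fin n))) := by
        rw [h]; exact hf
      exact this
    · have : f ∈ (Submonoid.closure C : Set (Function.End (Fin n))) := by
        rw [h]; exact endo_wendo hf
      exact this
  constructor
  · -- single inversions
    by_cases hn : 3 ≤ n
    · set I : Finset ℕ := Finset.Icc 1 ((n-1)/2) with hIdef
      have hex : ∀ t, t ∈ I → ∃ c, c ∈ C ∧ Good1 n t c := by
        intro t htI
        rw [hIdef, Finset.mem_Icc] at htI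
        obtain ⟨c, hc1, hc2⟩ := exists_good1 hW hmemE htI.1 (by omega) hn
        exact ⟨c, hc1, hc2⟩
      choose! φ hφ1 hφ2 using hex
      have hbound : ∀ t, t ∈ I → 1 ≤ t ∧ 2 * t ≤ n - 1 := by
        intro t htI; rw [hIdef, Finset.mem_Icc] at htI; omega
      have hinj : Set.InjOn φ ↑I := by
        intro a ha b hb hab
        have ha' := hbound a (Finset.mem_coe.mp ha)
        have hb' := hbound b (Finset.mem_coe.mp hb)
        have g1 := hφ2 a (Finset.mem_coe.mp ha)
        have g2 := hφ2 b (Finset.mem_coe.mp hb)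
        rw [hab] at g1
        rcases g1.2 with h1 | h1 <;> rcases g2.2 with h2 | h2 <;>
          · have := Set.singleton_eq_singleton_iff.mp (h1.symm.trans h2)
            omega
      have hsub : ↑(I.image φ) ⊆ {f ∈ C | (InvSet f).ncard = 1} := by
        intro x hx
        rw [Finset.coe_image] at hx
        obtain ⟨t, htI, rfl⟩ := hx
        have htI := Finset.mem_coe.mp htI
        refine ⟨hφ1 t htI, ?_⟩
        rcases (hφ2 t htI).2 with h | h <;> rw [h] <;> exact Set.ncard_singleton _
      calc (n - 1) / 2 = I.card := by rw [hIdef, Nat.card_Icc]; omega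
        _ = (I.image φ).card := (Finset.card_image_of_injOn hinj).symm
        _ = (↑(I.image φ) : Set (Function.End (Fin n))).ncard :=
            (Set.ncard_coe_finset _).symm
        _ ≤ _ := Set.ncard_le_ncard hsub (Set.toFinite _)
    · have : (n - 1) / 2 = 0 := by omega
      rw [this]
      exact Nat.zero_le _
  · -- double inversions
    set I2 : Finset ((_ : ℕ) × ℕ) :=
      (Finset.Icc 1 ((n-3)/3)).sigma (fun j => Finset.Icc (j+1) ((n-1-j)/2)) with hI2def
    have hmem2 : ∀ p : (_ : ℕ) × ℕ, p ∈ I2 →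
        1 ≤ p.1 ∧ 3 * p.1 + 3 ≤ n ∧ p.1 + 1 ≤ p.2 ∧ 2 * p.2 ≤ n - 1 - p.1 := by
      intro p hp
      rw [hI2def, Finset.mem_sigma, Finset.mem_Icc, Finset.mem_Icc] at hp
      have h3 : 3 * p.1 ≤ n - 3 := by
        have := hp.1.2
        omega
      omega
    have hex : ∀ p : (_ : ℕ) × ℕ, p ∈ I2 → ∃ c, c ∈ C ∧ Good2 n p.2 (p.2 + p.1) c := by
      intro p hp
      have hb := hmem2 p hp
      obtain ⟨c, hc1, hc2⟩ := exists_good2 hW hmemE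
        (show p.2 < p.2 + p.1 by omega) (by omega) (by omega)
      exact ⟨c, hc1, hc2⟩
    choose! ψ hψ1 hψ2 using hex
    have hinj : Set.InjOn ψ ↑I2 := by
      rintro ⟨j, l⟩ ha ⟨j', l'⟩ hb hab
      have ha' := hmem2 _ (Finset.mem_coe.mp ha)
      have hb' := hmem2 _ (Finset.mem_coe.mp hb)
      simp only at ha' hb'
      have g1 := hψ2 _ (Finset.mem_coe.mp ha)
      have g2 := hψ2 _ (Finset.mem_coe.mp hb)
      rw [hab] at g1
      simp only at g1 g2
      have hjj' : j = j' ∧ l = l' := by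
        rcases g1.2 with h1 | h1 <;> rcases g2.2 with h2 | h2 <;>
          · have := pair_eq (h1.symm.trans h2) (by omega) (by omega)
            omega
      obtain ⟨hj, hl⟩ := hjj'
      subst hj; subst hl; rfl
    have hsub : ↑(I2.image ψ) ⊆ {f ∈ C | (InvSet f).ncard = 2} := by
      intro x hx
      rw [Finset.coe_image] at hx
      obtain ⟨p, hpI, rfl⟩ := hx
      have hpI := Finset.mem_coe.mp hpI
      have hb := hmem2 p hpI
      refine ⟨hψ1 p hpI, ?_⟩
      rcases (hψ2 p hpI).2 with h | h <;> rw [h] <;> exact Set.ncard_pair (by omega)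
    calc (∑ j ∈ Finset.Icc 1 ((n - 3) / 3), (n - 3 * j - 1) / 2)
        ≤ ∑ j ∈ Finset.Icc 1 ((n - 3) / 3), (Finset.Icc (j+1) ((n-1-j)/2)).card := by
          apply Finset.sum_le_sum
          intro j hj
          rw [Finset.mem_Icc] at hj
          rw [Nat.card_Icc]
          have h3 : 3 * j ≤ n - 3 := by
            have := hj.2
            omega
          omega
      _ = I2.card := (Finset.card_sigma _ _).symm
      _ = (I2.image ψ).card := (Finset.card_image_of_injOn hinj).symm
      _ = (↑(I2.image ψ) : Set (Function.End (Fin n))).ncard :=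
          (Set.ncard_coe_finset _).symm
      _ ≤ _ := Set.ncard_le_ncard hsub (Set.toFinite _)
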